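/- For independent X^A ~ IG(μ_A, λ) and X^B ~ IG(μ_B, λ) with μ_A < μ_B and common shape λ, the probability that X^A < X^B is strictly greater than 1/2. -/

import Mathlib

open MeasureTheory Real Set ProbabilityTheory

/-- The inverse Gaussian density `IG(μ, λ)`. -/
noncomputable def igPDF (μ lam x : ℝ) : ℝ :=
  Real.sqrt (lam / (2 * Real.pi * x ^ 3)) *
    Real.exp (-(lam * (x - μ) ^ 2) / (2 * μ ^ 2 * x))

namespace IGaux

lemma igPDF_nonneg (μ lam x : ℝ) : 0 ≤ igPDF μ lam x :=
  mul_nonneg (Real.sqrt_nonneg _) (Real.exp_pos _).le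

lemma igPDF_pos {μ lam x : ℝ} (hlam : 0 < lam) (hx : 0 < x) :
    0 < igPDF μ lam x := by
  apply mul_pos _ (Real.exp_pos _)
  apply Real.sqrt_pos.mpr
  have hpi := Real.pi_pos
  positivity

lemma igPDF_meas (μ lam : ℝ) : Measurable (igPDF μ lam) := by
  unfold igPDF
  fun_prop

lemma gmeas (μ lam : ℝ) : Measurable fun x => ENNReal.ofReal (igPDF μ lam x) :=
  (igPDF_meas μ lam).ennreal_ofReal

lemma igPDF_ratio {μ1 μ2 lam t : ℝ} (hμ1 : 0 < μ1) (hμ2 : 0 < μ2) (ht : 0 < t) :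
    igPDF μ1 lam t =
      Real.exp (lam / μ1 - lam / μ2) *
        Real.exp (-((lam / (2 * μ1 ^ 2) - lam / (2 * μ2 ^ 2)) * t)) * igPDF μ2 lam t := by
  have h : -(lam * (t - μ1) ^ 2) / (2 * μ1 ^ 2 * t)
      = (lam / μ1 - lam / μ2) + (-((lam / (2 * μ1 ^ 2) - lam / (2 * μ2 ^ 2)) * t))
        + (-(lam * (t - μ2) ^ 2) / (2 * μ2 ^ 2 * t)) := by
    field_simp
    ring
  unfold igPDF
  rw [h, Real.exp_add, Real.exp_add]
  ring

/-- The law of an `IG(μ, λ)` random variable, as a measure on `ℝ`. -/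
noncomputable def nu (μ lam : ℝ) : Measure ℝ :=
  (volume.restrict (Ioi 0)).withDensity fun x => ENNReal.ofReal (igPDF μ lam x)

lemma law_eq {Ω : Type*} [MeasurableSpace Ω] (P : Measure Ω) [IsProbabilityMeasure P]
    (X : Ω → ℝ) (hX : Measurable X) (μ lam : ℝ)
    (hdens : ∀ s : Set ℝ, MeasurableSet s →
      P (X ⁻¹' s) = ENNReal.ofReal (∫ x in s ∩ Set.Ioi (0 : ℝ), igPDF μ lam x)) :
    P.map X = nu μ lam := by
  have hint : IntegrableOn (igPDF μ lam) (Ioi 0) := by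
    by_contra h
    have h2 := hdens univ MeasurableSet.univ
    rw [Set.univ_inter, integral_undef h] at h2
    simp at h2
  ext s hs
  rw [Measure.map_apply hX hs, hdens s hs, nu, withDensity_apply _ hs,
    Measure.restrict_restrict hs,
    ofReal_integral_eq_lintegral_ofReal (hint.mono_set inter_subset_right)
      (ae_of_all _ fun x => igPDF_nonneg μ lam x)]

lemma prod_lt_eq (μ1 μ2 lam : ℝ) [SFinite (nu μ2 lam)] :
    (nu μ1 lam).prod (nu μ2 lam) {p : ℝ × ℝ | p.1 < p.2}
      = ∫⁻ x in Ioi (0 : ℝ), ENNReal.ofReal (igPDF μ1 lam x)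
          * ∫⁻ y in Ioi x, ENNReal.ofReal (igPDF μ2 lam y) := by
  have hU : MeasurableSet {p : ℝ × ℝ | p.1 < p.2} :=
    measurableSet_lt measurable_fst measurable_snd
  rw [Measure.prod_apply hU]
  have hpre : ∀ x : ℝ, (Prod.mk x ⁻¹' {p : ℝ × ℝ | p.1 < p.2}) = Ioi x := fun x => rfl
  simp_rw [hpre]
  have hF : Measurable fun x : ℝ => nu μ2 lam (Ioi x) :=
    Antitone.measurable fun x x' hxx' => measure_mono (Ioi_subset_Ioi hxx')
  rw [nu, lintegral_withDensity_eq_lintegral_mul _ (gmeas μ1 lam) hF]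
  refine setLIntegral_congr_fun measurableSet_Ioi (fun x hx => ?_)
  simp only [Pi.mul_apply]
  congr 1
  rw [nu, withDensity_apply _ measurableSet_Ioi, Measure.restrict_restrict measurableSet_Ioi,
    inter_eq_self_of_subset_left (Ioi_subset_Ioi hx.le)]

end IGaux

open IGaux

/-- for independent `X^A ~ IG(μ_A, λ)` and `X^B ~ IG(μ_B, λ)` with
`μ_A < μ_B` and common shape `λ`, the probability that `X^A < X^B` is strictly greater
than `1/2`. -/
theorem ig_race_favors_smaller_mean
    {Ω : Type*} [MeasurableSpace Ω] (P : Measure Ω) [IsProbabilityMeasure P]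
    (XA XB : Ω → ℝ) (hXA : Measurable XA) (hXB : Measurable XB)
    (hindep : IndepFun XA XB P)
    (μA μB lam : ℝ) (hμA : 0 < μA) (hμB : 0 < μB) (hlam : 0 < lam) (hμ : μA < μB)
    (hdensA : ∀ s : Set ℝ, MeasurableSet s →
      P (XA ⁻¹' s) = ENNReal.ofReal (∫ x in s ∩ Set.Ioi (0 : ℝ), igPDF μA lam x))
    (hdensB : ∀ s : Set ℝ, MeasurableSet s →
      P (XB ⁻¹' s) = ENNReal.ofReal (∫ x in s ∩ Set.Ioi (0 : ℝ), igPDF μB lam x)) :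
    (1 : ENNReal) / 2 < P {ω | XA ω < XB ω} := by
  classical
  -- laws of XA and XB
  have hlawA : P.map XA = nu μA lam := law_eq P XA hXA μA lam hdensA
  have hlawB : P.map XB = nu μB lam := law_eq P XB hXB μB lam hdensB
  haveI hprobA : IsProbabilityMeasure (nu μA lam) :=
    hlawA ▸ Measure.isProbabilityMeasure_map hXA.aemeasurable
  haveI hprobB : IsProbabilityMeasure (nu μB lam) :=
    hlawB ▸ Measure.isProbabilityMeasure_map hXB.aemeasurable
  have hjoint : P.map (fun ω => (XA ω, XB ω)) = (nu μA lam).prod (nu μB lam) := by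
    rw [← hlawA, ← hlawB]
    exact (ProbabilityTheory.indepFun_iff_map_prod_eq_prod_map_map
      hXA.aemeasurable hXB.aemeasurable).mp hindep
  have hU : MeasurableSet {p : ℝ × ℝ | p.1 < p.2} :=
    measurableSet_lt measurable_fst measurable_snd
  have hP : P {ω | XA ω < XB ω} = (nu μA lam).prod (nu μB lam) {p : ℝ × ℝ | p.1 < p.2} := by
    have hset : {ω | XA ω < XB ω} = (fun ω => (XA ω, XB ω)) ⁻¹' {p : ℝ × ℝ | p.1 < p.2} := rfl
    rw [hset, ← Measure.map_apply (hXA.prodMk hXB) hU, hjoint]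
  set a := (nu μA lam).prod (nu μB lam) {p : ℝ × ℝ | p.1 < p.2} with ha
  set b := (nu μB lam).prod (nu μA lam) {p : ℝ × ℝ | p.1 < p.2} with hb
  -- the diagonal is null
  have hdiagnull : (nu μA lam).prod (nu μB lam) {p : ℝ × ℝ | p.1 = p.2} = 0 := by
    have hd : MeasurableSet {p : ℝ × ℝ | p.1 = p.2} :=
      measurableSet_eq_fun measurable_fst measurable_snd
    rw [Measure.prod_apply hd]
    have hpre : ∀ x : ℝ, (Prod.mk x ⁻¹' {p : ℝ × ℝ | p.1 = p.2}) = {x} := by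
      intro x; ext y; simp [eq_comm]
    have hsingle : ∀ x : ℝ, nu μB lam {x} = 0 := by
      intro x
      have h0 : (volume.restrict (Ioi (0 : ℝ))) {x} = 0 :=
        le_antisymm ((Measure.restrict_apply_le _ _).trans_eq (measure_singleton x)) zero_le
      rw [nu, withDensity_apply _ (measurableSet_singleton x),
        setLIntegral_measure_zero _ _ h0]
    simp only [hpre, hsingle, lintegral_const, zero_mul]
  -- a + b = 1
  have hLm : MeasurableSet {p : ℝ × ℝ | p.2 < p.1} :=
    measurableSet_lt measurable_snd measurable_fst
  have hLb : ((nu μA lam).prod (nu μB lam)) {p : ℝ × ℝ | p.2 < p.1} = b := by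
    rw [hb, ← Measure.prod_swap, Measure.map_apply measurable_swap hLm]
    rfl
  have hab1 : a + b = 1 := by
    have hdm : MeasurableSet {p : ℝ × ℝ | p.1 = p.2} :=
      measurableSet_eq_fun measurable_fst measurable_snd
    have e1 : ((nu μA lam).prod (nu μB lam))
        ({p : ℝ × ℝ | p.1 < p.2} ∪ {p : ℝ × ℝ | p.1 = p.2}) = a := by
      rw [measure_union ?_ hdm, hdiagnull, add_zero]
      rw [Set.disjoint_left]
      rintro p h1 h2
      simp only [Set.mem_setOf_eq] at h1 h2
      exact ne_of_lt h1 h2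
    have e2 : ((nu μA lam).prod (nu μB lam))
        (({p : ℝ × ℝ | p.1 < p.2} ∪ {p : ℝ × ℝ | p.1 = p.2}) ∪ {p : ℝ × ℝ | p.2 < p.1})
        = a + b := by
      rw [measure_union ?_ hLm, e1, hLb]
      rw [Set.disjoint_left]
      rintro p h1 h2
      simp only [Set.mem_union, Set.mem_setOf_eq] at h1 h2
      rcases h1 with h1 | h1
      · exact lt_asymm h1 h2
      · exact absurd h2 (by rw [h1]; exact lt_irrefl _)
    have hunion : (({p : ℝ × ℝ | p.1 < p.2} ∪ {p : ℝ × ℝ | p.1 = p.2})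
        ∪ {p : ℝ × ℝ | p.2 < p.1}) = univ := by
      ext p
      simp only [Set.mem_union, Set.mem_setOf_eq, Set.mem_univ, iff_true]
      rcases lt_trichotomy p.1 p.2 with h | h | h
      · exact Or.inl (Or.inl h)
      · exact Or.inl (Or.inr h)
      · exact Or.inr h
    rw [← e2, hunion, measure_univ]
  -- constants for the likelihood-ratio decomposition
  set c : ℝ := lam / (2 * μA ^ 2) - lam / (2 * μB ^ 2) with hc
  have hcpos : 0 < c := by
    rw [hc, sub_pos]
    apply div_lt_div_of_pos_left hlam (by positivity)
    nlinarith
  set K : ℝ := Real.exp (lam / μA - lam / μB) with hK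
  have hKpos : 0 < K := Real.exp_pos _
  have hratio : ∀ t : ℝ, 0 < t →
      igPDF μA lam t = K * Real.exp (-(c * t)) * igPDF μB lam t := fun t ht =>
    igPDF_ratio hμA hμB ht
  clear_value c K
  set gB : ℝ → ENNReal := fun x => ENNReal.ofReal (igPDF μB lam x) with hgB
  -- formulas for a and b
  have haeq : a = ∫⁻ x in Ioi (0 : ℝ), ENNReal.ofReal (igPDF μA lam x)
      * ∫⁻ y in Ioi x, ENNReal.ofReal (igPDF μB lam y) := prod_lt_eq μA μB lam
  have hbeq : b = ∫⁻ x in Ioi (0 : ℝ), gB x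
      * ∫⁻ y in Ioi x, ENNReal.ofReal (igPDF μA lam y) := prod_lt_eq μB μA lam
  have hb2 : b = ∫⁻ x in Ioi (0 : ℝ), gB x
      * ∫⁻ y in Ioi x, ENNReal.ofReal (K * Real.exp (-(c * y)) * igPDF μB lam y) := by
    rw [hbeq]
    refine setLIntegral_congr_fun measurableSet_Ioi (fun x hx => ?_)
    congr 1
    refine setLIntegral_congr_fun measurableSet_Ioi (fun y hy => ?_)
    rw [hratio y (lt_trans hx hy)]
  have ha2 : a = ∫⁻ x in Ioi (0 : ℝ), gB x
      * ∫⁻ y in Ioi x, ENNReal.ofReal (K * Real.exp (-(c * x)) * igPDF μB lam y) := by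
    rw [haeq]
    refine setLIntegral_congr_fun measurableSet_Ioi (fun x hx => ?_)
    rw [hratio x hx, ENNReal.ofReal_mul (mul_nonneg hKpos.le (Real.exp_pos _).le),
      mul_comm _ (gB x), mul_assoc]
    congr 1
    rw [← lintegral_const_mul _ (gmeas μB lam)]
    refine lintegral_congr fun y => ?_
    rw [← ENNReal.ofReal_mul (mul_nonneg hKpos.le (Real.exp_pos _).le)]
  -- the difference term
  set D : ENNReal := ∫⁻ x in Ioi (0 : ℝ), gB x
      * ∫⁻ y in Ioi x, ENNReal.ofReal
          (K * (Real.exp (-(c * x)) - Real.exp (-(c * y))) * igPDF μB lam y) with hD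
  have hmeas2 : Measurable fun y : ℝ =>
      ENNReal.ofReal (K * Real.exp (-(c * y)) * igPDF μB lam y) := by
    apply Measurable.ennreal_ofReal
    exact (measurable_const.mul (Real.measurable_exp.comp
      ((measurable_id.const_mul c).neg))).mul (igPDF_meas μB lam)
  have hsum : ∀ x ∈ Ioi (0 : ℝ),
      gB x * ∫⁻ y in Ioi x, ENNReal.ofReal (K * Real.exp (-(c * x)) * igPDF μB lam y)
        = gB x * (∫⁻ y in Ioi x, ENNReal.ofReal (K * Real.exp (-(c * y)) * igPDF μB lam y))
          + gB x * ∫⁻ y in Ioi x, ENNReal.ofReal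
              (K * (Real.exp (-(c * x)) - Real.exp (-(c * y))) * igPDF μB lam y) := by
    intro x hx
    rw [← mul_add]
    congr 1
    rw [← lintegral_add_left hmeas2]
    refine setLIntegral_congr_fun measurableSet_Ioi (fun y hy => ?_)
    have hnn2 : 0 ≤ K * Real.exp (-(c * y)) * igPDF μB lam y :=
      mul_nonneg (mul_nonneg hKpos.le (Real.exp_pos _).le) (igPDF_nonneg _ _ _)
    have hexple : Real.exp (-(c * y)) ≤ Real.exp (-(c * x)) := by
      apply Real.exp_le_exp.mpr
      nlinarith [mul_nonneg (sub_nonneg.mpr (le_of_lt (show x < y from hy))) hcpos.le]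
    have hnn3 : 0 ≤ K * (Real.exp (-(c * x)) - Real.exp (-(c * y))) * igPDF μB lam y :=
      mul_nonneg (mul_nonneg hKpos.le (sub_nonneg.mpr hexple)) (igPDF_nonneg _ _ _)
    rw [← ENNReal.ofReal_add hnn2 hnn3]
    congr 1
    ring
  have hmeasb' : Measurable fun x : ℝ => gB x
      * ∫⁻ y in Ioi x, ENNReal.ofReal (K * Real.exp (-(c * y)) * igPDF μB lam y) := by
    apply Measurable.mul (gmeas μB lam)
    exact Antitone.measurable fun x x' hxx' => lintegral_mono_set (Ioi_subset_Ioi hxx')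
  have hadd : a = b + D := by
    rw [ha2, hb2, hD, setLIntegral_congr_fun measurableSet_Ioi hsum]
    exact lintegral_add_left hmeasb' _
  -- positivity of integrals of gB over subintervals
  have hIBpos : ∀ s : Set ℝ, MeasurableSet s → s ⊆ Ioi 0 → 0 < volume s →
      0 < ∫⁻ y in s, gB y := by
    intro s hsm hs hvs
    rw [lintegral_pos_iff_support (gmeas μB lam)]
    have hsub : s ⊆ Function.support gB := by
      intro y hy
      have : 0 < igPDF μB lam y := igPDF_pos hlam (hs hy)
      simp only [hgB, Function.mem_support, ne_eq, ENNReal.ofReal_eq_zero, not_le]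
      exact this
    calc 0 < volume s := hvs
    _ = (volume.restrict s) s := (Measure.restrict_apply_self _ _).symm
    _ ≤ (volume.restrict s) (Function.support gB) := measure_mono hsub
  -- D is positive
  set δ : ℝ := K * (Real.exp (-(2 * c)) - Real.exp (-((5 / 2 : ℝ) * c))) with hδdef
  have hδpos : 0 < δ := by
    apply mul_pos hKpos
    rw [sub_pos]
    apply Real.exp_lt_exp.mpr
    linarith [hcpos]
  set I : ENNReal := ∫⁻ y in Ioo (5 / 2 : ℝ) 3, gB y with hI
  have hIpos : 0 < I :=
    hIBpos _ measurableSet_Ioo (fun y hy => lt_trans (by norm_num) hy.1) (by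
      rw [Real.volume_Ioo]; norm_num)
  have hDpos : 0 < D := by
    have hlow : 0 < ∫⁻ x in Ioo (1 : ℝ) 2, gB x * (ENNReal.ofReal δ * I) := by
      rw [lintegral_pos_iff_support (show Measurable fun x => gB x * (ENNReal.ofReal δ * I) from (gmeas μB lam).mul measurable_const)]
      have hsub : Ioo (1 : ℝ) 2 ⊆ Function.support fun x => gB x * (ENNReal.ofReal δ * I) := by
        intro x hx
        have h1 : gB x ≠ 0 := by
          simp only [hgB, ne_eq, ENNReal.ofReal_eq_zero, not_le]
          exact igPDF_pos hlam (lt_trans zero_lt_one hx.1)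
        have h2 : ENNReal.ofReal δ ≠ 0 := by
          simp only [ne_eq, ENNReal.ofReal_eq_zero, not_le]; exact hδpos
        simp only [Function.mem_support]
        exact mul_ne_zero h1 (mul_ne_zero h2 (ne_of_gt hIpos))
      calc (0 : ENNReal) < volume (Ioo (1 : ℝ) 2) := by rw [Real.volume_Ioo]; norm_num
      _ = (volume.restrict (Ioo (1 : ℝ) 2)) (Ioo (1 : ℝ) 2) :=
          (Measure.restrict_apply_self _ _).symm
      _ ≤ _ := measure_mono hsub
    refine lt_of_lt_of_le hlow ?_
    refine le_trans ?_ (lintegral_mono_set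
      (show Ioo (1 : ℝ) 2 ⊆ Ioi 0 from fun x hx => lt_trans zero_lt_one hx.1))
    refine lintegral_mono_ae ((ae_restrict_iff' measurableSet_Ioo).mpr
      (ae_of_all _ fun x hx => ?_))
    refine mul_le_mul_right ?_ _
    calc ENNReal.ofReal δ * I
        = ∫⁻ y in Ioo (5 / 2 : ℝ) 3, ENNReal.ofReal (δ * igPDF μB lam y) := by
          rw [← lintegral_const_mul _ (gmeas μB lam)]
          exact lintegral_congr fun y => (ENNReal.ofReal_mul hδpos.le).symm
    _ ≤ ∫⁻ y in Ioo (5 / 2 : ℝ) 3, ENNReal.ofReal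
          (K * (Real.exp (-(c * x)) - Real.exp (-(c * y))) * igPDF μB lam y) := by
        refine lintegral_mono_ae ((ae_restrict_iff' measurableSet_Ioo).mpr
          (ae_of_all _ fun y hy => ?_))
        apply ENNReal.ofReal_le_ofReal
        apply mul_le_mul_of_nonneg_right _ (igPDF_nonneg _ _ _)
        rw [hδdef]
        apply mul_le_mul_of_nonneg_left _ hKpos.le
        apply sub_le_sub
        · apply Real.exp_le_exp.mpr
          nlinarith [mul_pos (show (0:ℝ) < 2 - x by linarith [hx.2]) hcpos]
        · apply Real.exp_le_exp.mpr
          nlinarith [mul_pos (show (0:ℝ) < y - 5 / 2 by linarith [hy.1]) hcpos]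
    _ ≤ ∫⁻ y in Ioi x, ENNReal.ofReal
          (K * (Real.exp (-(c * x)) - Real.exp (-(c * y))) * igPDF μB lam y) := by
        apply lintegral_mono_set
        intro y hy
        exact lt_trans (lt_trans hx.2 (by norm_num)) hy.1
  -- conclude
  have hane : a ≠ ⊤ := measure_ne_top _ _
  have hbne : b ≠ ⊤ := measure_ne_top _ _
  have hba : b < a := by
    rw [hadd]
    exact ENNReal.lt_add_right hbne (ne_of_gt hDpos)
  rw [hP]
  by_contra hcon
  push_neg at hcon
  have : (1 : ENNReal) < 1 := by
    calc (1 : ENNReal) = a + b := hab1.symm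
    _ < a + a := ENNReal.add_lt_add_left hane hba
    _ ≤ 1 / 2 + 1 / 2 := add_le_add hcon hcon
    _ = 1 := ENNReal.add_halves 1
  exact absurd this (lt_irrefl _)
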